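/- Let ν and ν̃ be probability measures on (Fin d → ℝ), both concentrated on nonnegative vectors. If the Poisson compound of ν equals the Poisson compound of ν̃ as measures on (Fin d → ℕ), then ν = ν̃. -/

import Mathlib

open MeasureTheory ProbabilityTheory

/-- Poisson compound of a measure `ν` on `Fin d → ℝ`: conditionally on `y ~ ν`, the
coordinates are independent Poisson variables with rates `y j`. -/
noncomputable def poissonCompound (d : ℕ) (ν : Measure (Fin d → ℝ)) : Measure (Fin d → ℕ) :=
  ν.bind (fun y => Measure.pi (fun j => (poissonPMF (Real.toNNReal (y j))).toMeasure))

section Aux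

open Real NNReal ENNReal Filter Metric Topology

variable {d : ℕ}

noncomputable def pk (d : ℕ) (y : Fin d → ℝ) : Measure (Fin d → ℕ) :=
  Measure.pi (fun j => (poissonPMF (Real.toNNReal (y j))).toMeasure)

lemma pk_singleton (y : Fin d → ℝ) (n : Fin d → ℕ) :
    pk d y {n} = ∏ j, ENNReal.ofReal (poissonPMFReal (y j).toNNReal (n j)) := by
  rw [pk, ← Set.univ_pi_singleton n, Measure.pi_pi]
  refine Finset.prod_congr rfl fun j _ => ?_
  rw [PMF.toMeasure_apply_singleton _ _ (measurableSet_singleton _)]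
  rfl

lemma measurable_pk_singleton (n : Fin d → ℕ) :
    Measurable (fun y : Fin d → ℝ => pk d y {n}) := by
  simp_rw [pk_singleton]
  refine Finset.measurable_prod _ fun j _ => ?_
  apply Measurable.ennreal_ofReal
  unfold poissonPMFReal
  fun_prop

lemma measurable_pk : Measurable (pk d) := by
  apply Measure.measurable_of_measurable_coe
  intro s hs
  have hscount : s.Countable := s.to_countable
  have : ∀ y, pk d y s = ∑' n : s, pk d y {(n : Fin d → ℕ)} := by
    intro y
    conv_lhs => rw [← Set.biUnion_of_singleton s]
    exact measure_biUnion hscount (fun a _ b _ hab => by simp [Set.disjoint_singleton, hab])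
      (fun a _ => measurableSet_singleton _)
  simp_rw [this]
  exact Measurable.ennreal_tsum fun n => measurable_pk_singleton _

lemma tsum_pi_prod : ∀ {d : ℕ} (f : Fin d → ℕ → ℝ≥0∞),
    ∑' n : Fin d → ℕ, ∏ j, f j (n j) = ∏ j, ∑' k, f j k := by
  intro d
  induction d with
  | zero =>
    intro f
    rw [tsum_eq_single (default : Fin 0 → ℕ) (fun b hb => absurd (Subsingleton.elim b default) hb)]
    simp
  | succ d ih =>
    intro f
    rw [← (Fin.consEquiv (fun _ : Fin (d + 1) => ℕ)).tsum_eq (fun n => ∏ j, f j (n j))]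
    have h1 : ∀ p : ℕ × (Fin d → ℕ),
        (fun n : Fin (d+1) → ℕ => ∏ j, f j (n j)) ((Fin.consEquiv (fun _ => ℕ)) p) =
        f 0 p.1 * ∏ j : Fin d, f j.succ (p.2 j) := by
      intro p
      simp only [Fin.consEquiv_apply, Fin.prod_univ_succ, Fin.cons_zero, Fin.cons_succ]
    simp_rw [h1]
    rw [ENNReal.tsum_prod']
    simp only [ENNReal.tsum_mul_left, ENNReal.tsum_mul_right]
    rw [ih (fun j k => f j.succ k), Fin.prod_univ_succ]

lemma tsum_ofReal_exp (x : ℝ) (hx : 0 ≤ x) :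
    ∑' k : ℕ, ENNReal.ofReal (x ^ k / k.factorial) = ENNReal.ofReal (Real.exp x) := by
  have hs : HasSum (fun k : ℕ => x ^ k / k.factorial) (Real.exp x) := by
    rw [Real.exp_eq_exp_ℝ]; exact NormedSpace.expSeries_div_hasSum_exp x
  have h3 := ENNReal.hasSum_coe.mpr (hs.toNNReal (fun n => by positivity))
  simp only [ENNReal.ofReal]
  rw [h3.tsum_eq]

lemma pois_series (t : ℝ) (ht : 0 ≤ t) (l : ℝ≥0) :
    ∑' k : ℕ, ENNReal.ofReal (t ^ k * poissonPMFReal l k)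
      = ENNReal.ofReal (Real.exp ((t - 1) * l)) := by
  unfold poissonPMFReal
  have h : ∀ k : ℕ, t ^ k * (Real.exp (-(l:ℝ)) * (l:ℝ) ^ k / k.factorial)
      = Real.exp (-(l:ℝ)) * ((t * l) ^ k / k.factorial) := by
    intro k; rw [mul_pow]; ring
  simp_rw [h, ENNReal.ofReal_mul (Real.exp_nonneg _), ENNReal.tsum_mul_left,
    tsum_ofReal_exp (t * l) (by positivity), ← ENNReal.ofReal_mul (Real.exp_nonneg _),
    ← Real.exp_add]
  congr 2
  ring



variable {d : ℕ}







lemma compound_singleton (ν : Measure (Fin d → ℝ)) (n : Fin d → ℕ) :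
    poissonCompound d ν {n}
      = ∫⁻ y, ∏ j, ENNReal.ofReal (poissonPMFReal (y j).toNNReal (n j)) ∂ν := by
  rw [poissonCompound, show (fun y : Fin d → ℝ =>
      Measure.pi (fun j => (poissonPMF (Real.toNNReal (y j))).toMeasure)) = pk d from rfl,
    Measure.bind_apply (measurableSet_singleton n) measurable_pk.aemeasurable]
  exact lintegral_congr fun y => pk_singleton y n

lemma measurable_prod_pmf (t : Fin d → ℝ) (n : Fin d → ℕ) :
    Measurable (fun y : Fin d → ℝ =>
      ∏ j, ENNReal.ofReal (t j ^ n j * poissonPMFReal (y j).toNNReal (n j))) := by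
  refine Finset.measurable_prod _ fun j _ => Measurable.ennreal_ofReal ?_
  unfold poissonPMFReal
  fun_prop

lemma compound_pgf (ν : Measure (Fin d → ℝ)) (t : Fin d → ℝ) (ht0 : ∀ j, 0 ≤ t j) :
    ∑' n : Fin d → ℕ, (∏ j, ENNReal.ofReal (t j ^ n j)) * poissonCompound d ν {n}
      = ∫⁻ y, ENNReal.ofReal (Real.exp (∑ j, (t j - 1) * ((y j).toNNReal : ℝ))) ∂ν := by
  have hne : ∀ n : Fin d → ℕ, (∏ j, ENNReal.ofReal (t j ^ n j)) ≠ ∞ :=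
    fun n => ENNReal.prod_ne_top fun j _ => ENNReal.ofReal_ne_top
  calc
    ∑' n : Fin d → ℕ, (∏ j, ENNReal.ofReal (t j ^ n j)) * poissonCompound d ν {n}
      = ∑' n : Fin d → ℕ, ∫⁻ y,
          ∏ j, ENNReal.ofReal (t j ^ n j * poissonPMFReal (y j).toNNReal (n j)) ∂ν := by
        refine tsum_congr fun n => ?_
        rw [compound_singleton, ← lintegral_const_mul' _ _ (hne n)]
        refine lintegral_congr fun y => ?_
        rw [← Finset.prod_mul_distrib]
        exact Finset.prod_congr rfl fun j _ =>
          (ENNReal.ofReal_mul (pow_nonneg (ht0 j) _)).symm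
    _ = ∫⁻ y, ∑' n : Fin d → ℕ,
          ∏ j, ENNReal.ofReal (t j ^ n j * poissonPMFReal (y j).toNNReal (n j)) ∂ν :=
        (lintegral_tsum fun n => (measurable_prod_pmf t n).aemeasurable).symm
    _ = _ := by
        refine lintegral_congr fun y => ?_
        rw [tsum_pi_prod (fun j k => ENNReal.ofReal (t j ^ k * poissonPMFReal (y j).toNNReal k))]
        have : ∀ j : Fin d, ∑' k : ℕ, ENNReal.ofReal (t j ^ k * poissonPMFReal (y j).toNNReal k)
            = ENNReal.ofReal (Real.exp ((t j - 1) * ((y j).toNNReal : ℝ))) :=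
          fun j => pois_series (t j) (ht0 j) _
        simp_rw [this]
        rw [← ENNReal.ofReal_prod_of_nonneg fun j _ => (Real.exp_nonneg _), ← Real.exp_sum]

lemma window_lintegral (ν ν' : Measure (Fin d → ℝ))
    (h : poissonCompound d ν = poissonCompound d ν') (t : Fin d → ℝ) (ht0 : ∀ j, 0 ≤ t j) :
    ∫⁻ y, ENNReal.ofReal (Real.exp (∑ j, (t j - 1) * ((y j).toNNReal : ℝ))) ∂ν
      = ∫⁻ y, ENNReal.ofReal (Real.exp (∑ j, (t j - 1) * ((y j).toNNReal : ℝ))) ∂ν' := by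
  rw [← compound_pgf ν t ht0, ← compound_pgf ν' t ht0, h]

lemma window_real (ν ν' : Measure (Fin d → ℝ))
    (h : poissonCompound d ν = poissonCompound d ν')
    (r : Fin d → ℝ) (hr0 : ∀ j, 0 ≤ r j) (hr1 : ∀ j, r j ≤ 1) :
    ∫ y, Real.exp (-∑ j, r j * ((y j).toNNReal : ℝ)) ∂ν
      = ∫ y, Real.exp (-∑ j, r j * ((y j).toNNReal : ℝ)) ∂ν' := by
  have hmeas : Measurable (fun y : Fin d → ℝ => Real.exp (-∑ j, r j * ((y j).toNNReal : ℝ))) := by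
    fun_prop
  have hw := window_lintegral ν ν' h (fun j => 1 - r j)
    (fun j => by linarith [hr1 j])
  beta_reduce at hw
  rw [integral_eq_lintegral_of_nonneg_ae (Filter.Eventually.of_forall fun y => Real.exp_nonneg _)
      hmeas.aestronglyMeasurable,
    integral_eq_lintegral_of_nonneg_ae (Filter.Eventually.of_forall fun y => Real.exp_nonneg _)
      hmeas.aestronglyMeasurable]
  congr 1
  have : ∀ y : Fin d → ℝ, (∑ j, (1 - r j - 1) * ((y j).toNNReal : ℝ))
      = -∑ j, r j * ((y j).toNNReal : ℝ) := by
    intro y; rw [← Finset.sum_neg_distrib]; exact Finset.sum_congr rfl fun j _ => by ring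
  simp_rw [this] at hw
  exact hw

variable {α : Type*} [MeasurableSpace α]

lemma exp_mul_le (c u : ℝ) (hc : 0 < c) (hu : 0 ≤ u) : u * Real.exp (-(c * u)) ≤ 1 / c := by
  rw [le_div_iff₀ hc]
  have h1 : c * u ≤ Real.exp (c * u) := (Real.add_one_le_exp _).trans' (by linarith)
  calc u * Real.exp (-(c * u)) * c = (c * u) * Real.exp (-(c * u)) := by ring
    _ ≤ Real.exp (c * u) * Real.exp (-(c * u)) := by
        exact mul_le_mul_of_nonneg_right h1 (Real.exp_nonneg _)
    _ = 1 := by rw [← Real.exp_add]; simp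

noncomputable def Hfun (μ : Measure α) (S : α → ℝ) (z : ℂ) : ℂ :=
  ∫ a, Complex.exp (-(z * S a)) ∂μ

lemma Hfun_meas (μ : Measure α) (S : α → ℝ) (hS : Measurable S) (z : ℂ) :
    AEStronglyMeasurable (fun a => Complex.exp (-(z * S a))) μ := by
  apply Measurable.aestronglyMeasurable
  have : Measurable fun a => -(z * (S a : ℂ)) :=
    ((Complex.measurable_ofReal.comp hS).const_mul z).neg
  exact Complex.measurable_exp.comp this

lemma Hfun_norm (S : α → ℝ) (z : ℂ) (a : α) :
    ‖Complex.exp (-(z * S a))‖ = Real.exp (-(z.re * S a)) := by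
  rw [Complex.norm_exp]
  congr 1
  simp [Complex.mul_re]

lemma Hfun_int (μ : Measure α) [IsProbabilityMeasure μ] (S : α → ℝ) (hS : Measurable S)
    (hS0 : ∀ a, 0 ≤ S a) (z : ℂ) (hz : 0 ≤ z.re) :
    Integrable (fun a => Complex.exp (-(z * S a))) μ := by
  refine ⟨Hfun_meas μ S hS z, HasFiniteIntegral.of_bounded (C := 1) ?_⟩
  refine Filter.Eventually.of_forall fun a => ?_
  rw [Hfun_norm]
  exact Real.exp_le_one_iff.mpr (by nlinarith [hS0 a, hz])

lemma Hfun_deriv (μ : Measure α) [IsProbabilityMeasure μ] (S : α → ℝ) (hS : Measurable S)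
    (hS0 : ∀ a, 0 ≤ S a) (z₀ : ℂ) (hz₀ : 0 < z₀.re) :
    HasDerivAt (Hfun μ S) (∫ a, Complex.exp (-(z₀ * S a)) * (-(S a : ℂ)) ∂μ) z₀ := by
  set c : ℝ := z₀.re / 2 with hc
  have hcpos : 0 < c := by positivity
  have key := hasDerivAt_integral_of_dominated_loc_of_deriv_le (μ := μ)
    (F := fun z a => Complex.exp (-(z * S a)))
    (F' := fun z a => Complex.exp (-(z * S a)) * (-(S a : ℂ)))
    (x₀ := z₀) (bound := fun _ => 1 / c) (s := Metric.ball z₀ c) (Metric.ball_mem_nhds z₀ hcpos)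
    (Filter.Eventually.of_forall fun z => Hfun_meas μ S hS z)
    (Hfun_int μ S hS hS0 z₀ hz₀.le)
    (by
      apply Measurable.aestronglyMeasurable
      have h1 : Measurable fun a => -(z₀ * (S a : ℂ)) :=
        ((Complex.measurable_ofReal.comp hS).const_mul z₀).neg
      exact (Complex.measurable_exp.comp h1).mul
        ((Complex.measurable_ofReal.comp hS).neg))
    (Filter.Eventually.of_forall fun a z hz => by
      have hzre : c ≤ z.re := by
        have h2 : dist z z₀ < c := hz
        rw [Complex.dist_eq] at h2
        have h3 := (abs_le.mp ((Complex.abs_re_le_norm (z - z₀)).trans h2.le)).1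
        simp only [Complex.sub_re] at h3
        rw [hc]; linarith
      rw [norm_mul, Hfun_norm, norm_neg, Complex.norm_real, Real.norm_eq_abs,
        abs_of_nonneg (hS0 a)]
      calc Real.exp (-(z.re * S a)) * S a ≤ Real.exp (-(c * S a)) * S a := by
            apply mul_le_mul_of_nonneg_right _ (hS0 a)
            exact Real.exp_le_exp.mpr (by nlinarith [hS0 a])
        _ = S a * Real.exp (-(c * S a)) := by ring
        _ ≤ 1 / c := exp_mul_le c (S a) hcpos (hS0 a))
    (integrable_const _)
    (Filter.Eventually.of_forall fun a z _ => by
      have h1 : HasDerivAt (fun z : ℂ => -(z * S a)) (-(S a : ℂ)) z := by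
        simpa using ((hasDerivAt_id' z).mul_const (S a : ℂ)).fun_neg
      simpa using h1.cexp)
  exact key.2

lemma Hfun_real (μ : Measure α) (S : α → ℝ) (t : ℝ) :
    Hfun μ S t = ((∫ a, Real.exp (-(t * S a)) ∂μ : ℝ) : ℂ) := by
  rw [Hfun]
  calc ∫ a, Complex.exp (-(↑t * ↑(S a))) ∂μ
      = ∫ a, ((Real.exp (-(t * S a)) : ℝ) : ℂ) ∂μ := by
        refine integral_congr_ae (Filter.Eventually.of_forall fun a => ?_)
        simp only [Complex.ofReal_exp]
        norm_cast
    _ = _ := integral_ofReal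

lemma laplace_halfline (μ μ' : Measure α) [IsProbabilityMeasure μ] [IsProbabilityMeasure μ']
    (S : α → ℝ) (hS : Measurable S) (hS0 : ∀ a, 0 ≤ S a) (δ : ℝ) (hδ : 0 < δ)
    (hwin : ∀ t : ℝ, 0 < t → t ≤ δ →
      ∫ a, Real.exp (-(t * S a)) ∂μ = ∫ a, Real.exp (-(t * S a)) ∂μ') :
    ∫ a, Real.exp (-(S a)) ∂μ = ∫ a, Real.exp (-(S a)) ∂μ' := by
  set U : Set ℂ := {z | 0 < z.re} with hU
  have hUopen : IsOpen U := isOpen_lt continuous_const Complex.continuous_re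
  have hUconn : IsPreconnected U := (convex_halfSpace_re_gt 0).isPreconnected
  have hana : ∀ (m : Measure α), IsProbabilityMeasure m → AnalyticOnNhd ℂ (Hfun m S) U := by
    intro m hm
    refine DifferentiableOn.analyticOnNhd (fun z hz => ?_) hUopen
    exact (Hfun_deriv m S hS hS0 z hz).differentiableAt.differentiableWithinAt
  set z₀ : ℂ := ((δ / 2 : ℝ) : ℂ) with hz₀
  have hz₀U : z₀ ∈ U := by
    simp only [hU, Set.mem_setOf_eq, hz₀, Complex.ofReal_re]
    positivity
  have hseq : Tendsto (fun n : ℕ => ((δ / 2 * (1 + 1 / (n + 1)) : ℝ) : ℂ)) atTop (𝓝[≠] z₀) := by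
    have h0 : Tendsto (fun n : ℕ => 1 / ((n : ℝ) + 1)) atTop (𝓝 0) :=
      tendsto_one_div_add_atTop_nhds_zero_nat
    have h1 : Tendsto (fun n : ℕ => (δ / 2 * (1 + 1 / (n + 1)) : ℝ)) atTop (𝓝 (δ / 2)) := by
      have h2 : Tendsto (fun n : ℕ => (1 + 1 / ((n : ℝ) + 1))) atTop (𝓝 1) := by
        simpa using tendsto_const_nhds.add h0
      simpa using tendsto_const_nhds.mul h2
    have h2 : Tendsto (fun n : ℕ => ((δ / 2 * (1 + 1 / (n + 1)) : ℝ) : ℂ)) atTop (𝓝 z₀) :=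
      (Complex.continuous_ofReal.tendsto _).comp h1
    refine tendsto_nhdsWithin_of_tendsto_nhds_of_eventually_within _ h2
      (Filter.Eventually.of_forall fun n => ?_)
    simp only [Set.mem_compl_iff, Set.mem_singleton_iff, hz₀]
    intro hcontr
    rw [Complex.ofReal_inj] at hcontr
    have hpos : (0 : ℝ) < 1 / ((n : ℝ) + 1) := by positivity
    nlinarith
  have hfreq : ∃ᶠ z in 𝓝[≠] z₀, Hfun μ S z = Hfun μ' S z := by
    apply hseq.frequently
    refine Filter.Frequently.of_forall fun n => ?_
    have htpos : (0 : ℝ) < δ / 2 * (1 + 1 / (n + 1)) := by positivity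
    have htle : δ / 2 * (1 + 1 / (n + 1)) ≤ δ := by
      have h1 : 1 / ((n : ℝ) + 1) ≤ 1 := by
        rw [div_le_one (by positivity)]; linarith [Nat.cast_nonneg (α := ℝ) n]
      nlinarith
    rw [Hfun_real, Hfun_real, hwin _ htpos htle]
  have heq := (hana μ inferInstance).eqOn_of_preconnected_of_frequently_eq
    (hana μ' inferInstance) hUconn hz₀U hfreq
  have h1 : Hfun μ S 1 = Hfun μ' S 1 := heq (by simp [hU])
  rw [show (1:ℂ) = ((1:ℝ):ℂ) by norm_cast, Hfun_real, Hfun_real, Complex.ofReal_inj] at h1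
  simpa using h1

variable {d : ℕ}

lemma sw_step (ν ν' : Measure (Fin d → ℝ))
    [IsProbabilityMeasure ν] [IsProbabilityMeasure ν']
    (hν : ∀ᵐ y ∂ν, ∀ j, 0 ≤ y j) (hν' : ∀ᵐ y ∂ν', ∀ j, 0 ≤ y j)
    (hlap : ∀ s : Fin d → ℝ, (∀ j, 0 ≤ s j) →
      ∫ y, Real.exp (-∑ j, s j * ((y j).toNNReal : ℝ)) ∂ν
        = ∫ y, Real.exp (-∑ j, s j * ((y j).toNNReal : ℝ)) ∂ν') :
    ν = ν' := by
  classical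
  set φ : (Fin d → ℝ) → (Fin d → ℝ) := fun y j => Real.exp (-(y j)) with hφ
  have hφcont : Continuous φ := continuous_pi fun j => ((continuous_apply j).neg).rexp
  have hφmeas : Measurable φ := hφcont.measurable
  have hφinj : Function.Injective φ := by
    intro y y' hyy'
    funext j
    have h1 : Real.exp (-(y j)) = Real.exp (-(y' j)) := congrFun hyy' j
    have := Real.exp_injective h1
    linarith
  have hφemb : MeasurableEmbedding φ := hφmeas.measurableEmbedding hφinj
  set μ : Measure (Fin d → ℝ) := ν.map φ with hμdef
  set μ' : Measure (Fin d → ℝ) := ν'.map φ with hμ'def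
  haveI : IsProbabilityMeasure μ := Measure.isProbabilityMeasure_map hφmeas.aemeasurable
  haveI : IsProbabilityMeasure μ' := Measure.isProbabilityMeasure_map hφmeas.aemeasurable
  set K : Set (Fin d → ℝ) := Set.Icc 0 1 with hK
  have hKmeas : MeasurableSet K := by
    rw [hK, ← Set.pi_univ_Icc]
    exact MeasurableSet.pi Set.countable_univ fun j _ => measurableSet_Icc
  have hmemK : ∀ (ρ : Measure (Fin d → ℝ)), (∀ᵐ y ∂ρ, ∀ j, 0 ≤ y j) →
      ∀ᵐ x ∂(ρ.map φ), x ∈ K := by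
    intro ρ hρ
    refine (MeasureTheory.ae_map_iff hφmeas.aemeasurable (p := fun x => x ∈ K)
      (by simpa using hKmeas)).mpr ?_
    filter_upwards [hρ] with y hy
    rw [hK, ← Set.pi_univ_Icc, Set.mem_univ_pi]
    intro j
    exact ⟨Real.exp_nonneg _, Real.exp_le_one_iff.mpr (by simpa using hy j)⟩
  have hμK : ∀ᵐ x ∂μ, x ∈ K := hmemK ν hν
  have hμ'K : ∀ᵐ x ∂μ', x ∈ K := hmemK ν' hν'
  have hKbound : ∀ x ∈ K, ∀ j, 0 ≤ x j ∧ x j ≤ 1 := by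
    intro x hx j
    rw [hK, ← Set.pi_univ_Icc, Set.mem_univ_pi] at hx
    exact hx j
  have hmono : ∀ m : Fin d → ℕ, ∫ x, ∏ j, x j ^ m j ∂μ = ∫ x, ∏ j, x j ^ m j ∂μ' := by
    intro m
    have hmeas : Measurable (fun x : Fin d → ℝ => ∏ j, x j ^ m j) := by fun_prop
    have hmap : ∀ ρ : Measure (Fin d → ℝ),
        ∫ x, ∏ j, x j ^ m j ∂(ρ.map φ) = ∫ y, Real.exp (-∑ j, (m j : ℝ) * y j) ∂ρ := by
      intro ρ
      rw [integral_map hφmeas.aemeasurable hmeas.aestronglyMeasurable]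
      refine integral_congr_ae (Eventually.of_forall fun y => ?_)
      simp only [hφ]
      calc ∏ j, Real.exp (-(y j)) ^ m j
          = ∏ j, Real.exp ((m j : ℝ) * (-(y j))) :=
            Finset.prod_congr rfl fun j _ => (Real.exp_nat_mul _ _).symm
        _ = Real.exp (∑ j, (m j : ℝ) * (-(y j))) := (Real.exp_sum _ _).symm
        _ = Real.exp (-∑ j, (m j : ℝ) * y j) := by
            congr 1
            rw [← Finset.sum_neg_distrib]
            exact Finset.sum_congr rfl fun j _ => by ring
    have hbridge : ∀ ρ : Measure (Fin d → ℝ), (∀ᵐ y ∂ρ, ∀ j, 0 ≤ y j) →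
        ∫ y, Real.exp (-∑ j, (m j : ℝ) * y j) ∂ρ
          = ∫ y, Real.exp (-∑ j, (m j : ℝ) * ((y j).toNNReal : ℝ)) ∂ρ := by
      intro ρ hρ
      refine integral_congr_ae ?_
      filter_upwards [hρ] with y hy
      congr 2
      exact Finset.sum_congr rfl fun j _ => by rw [Real.coe_toNNReal _ (hy j)]
    rw [hmap ν, hmap ν', hbridge ν hν, hbridge ν' hν',
      hlap (fun j => (m j : ℝ)) (fun j => Nat.cast_nonneg _)]
  have hint : ∀ (ρ : Measure (Fin d → ℝ)), IsProbabilityMeasure ρ →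
      (∀ᵐ x ∂ρ, x ∈ K) → ∀ (g : (Fin d → ℝ) → ℝ), Measurable g → ∀ (D : ℝ),
      (∀ x ∈ K, |g x| ≤ D) → Integrable g ρ := by
    intro ρ hρ hρK g hg D hD
    refine ⟨hg.aestronglyMeasurable, HasFiniteIntegral.of_bounded (C := D) ?_⟩
    filter_upwards [hρK] with x hx
    simpa using hD x hx
  have key : ∀ f : (Fin d → ℝ) → ℝ, Continuous f → ∀ C : ℝ, (∀ x, |f x| ≤ C) →
      ∫ x, f x ∂μ = ∫ x, f x ∂μ' := by
    intro f hfc C hC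
    haveI : CompactSpace ↥K := isCompact_iff_compactSpace.mp isCompact_Icc
    set coords : Fin d → C(↥K, ℝ) :=
      fun j => ⟨fun x => (x : Fin d → ℝ) j, (continuous_apply j).comp continuous_subtype_val⟩
      with hcoords
    set Φ := MvPolynomial.aeval (R := ℝ) coords with hΦ
    set A : Subalgebra ℝ C(↥K, ℝ) := Φ.range with hA
    have heval : ∀ (p : MvPolynomial (Fin d) ℝ) (x : ↥K),
        (Φ p) x = MvPolynomial.eval (x : Fin d → ℝ) p := by
      intro p x
      induction p using MvPolynomial.induction_on with
      | C a => simp [hΦ]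
      | add p q hp hq => simp [map_add, hp, hq]
      | mul_X p j hp => rw [map_mul, ContinuousMap.mul_apply, hp]; simp [hΦ, hcoords]
    have hsep : A.SeparatesPoints := by
      intro x y hxy
      obtain ⟨j, hj⟩ := Function.ne_iff.mp (fun hc => hxy (Subtype.ext hc))
      have hmem : coords j ∈ A := ⟨MvPolynomial.X j, by simp [hΦ]⟩
      refine ⟨⇑(coords j), ⟨coords j, hmem, rfl⟩, ?_⟩
      simpa [hcoords] using hj
    have habs : ∀ ε : ℝ, 0 < ε → |∫ x, f x ∂μ - ∫ x, f x ∂μ'| ≤ 2 * ε := by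
      intro ε hε
      obtain ⟨⟨g, hgA⟩, hgapprox⟩ :=
        ContinuousMap.exists_mem_subalgebra_near_continuous_of_separatesPoints A hsep
          (fun x : ↥K => f x) (hfc.comp continuous_subtype_val) ε hε
      obtain ⟨p, hp⟩ := hgA
      have hp' : Φ p = g := hp
      have hgp : ∀ x ∈ K, |f x - MvPolynomial.eval x p| ≤ ε := by
        intro x hx
        have h1 : ‖g ⟨x, hx⟩ - f x‖ < ε := hgapprox ⟨x, hx⟩
        have h2 : g ⟨x, hx⟩ = MvPolynomial.eval x p := by
          rw [← hp']; exact heval p ⟨x, hx⟩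
        rw [h2, Real.norm_eq_abs] at h1
        calc |f x - MvPolynomial.eval x p| = |MvPolynomial.eval x p - f x| := abs_sub_comm _ _
          _ ≤ ε := h1.le
      have hpmeas : Measurable (fun x : Fin d → ℝ => MvPolynomial.eval x p) :=
        (MvPolynomial.continuous_eval _).measurable
      have hpbound : ∀ x ∈ K, |MvPolynomial.eval x p| ≤ C + ε := by
        intro x hx
        calc |MvPolynomial.eval x p|
            = |f x - (f x - MvPolynomial.eval x p)| := by congr 1; ring
          _ ≤ |f x| + |f x - MvPolynomial.eval x p| := abs_sub _ _
          _ ≤ C + ε := add_le_add (hC x) (hgp x hx)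
      have hstep1 : ∀ (ρ : Measure (Fin d → ℝ)) (hρ : IsProbabilityMeasure ρ),
          (∀ᵐ x ∂ρ, x ∈ K) →
          |∫ x, f x ∂ρ - ∫ x, MvPolynomial.eval x p ∂ρ| ≤ ε := by
        intro ρ hρ hρK
        have hf : Integrable f ρ := hint ρ hρ hρK f hfc.measurable C (fun x _ => hC x)
        have hp2 : Integrable (fun x => MvPolynomial.eval x p) ρ :=
          hint ρ hρ hρK _ hpmeas (C + ε) hpbound
        rw [← integral_sub hf hp2]
        calc |∫ x, (f x - MvPolynomial.eval x p) ∂ρ|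
            ≤ ∫ x, |f x - MvPolynomial.eval x p| ∂ρ := by
              simpa [Real.norm_eq_abs] using
                norm_integral_le_integral_norm (fun x => f x - MvPolynomial.eval x p) (μ := ρ)
          _ ≤ ∫ _x, ε ∂ρ := by
              refine integral_mono_ae (hf.sub hp2).abs (integrable_const ε) ?_
              filter_upwards [hρK] with x hx
              exact hgp x hx
          _ = ε := by simp
      have hstep2 : ∫ x, MvPolynomial.eval x p ∂μ = ∫ x, MvPolynomial.eval x p ∂μ' := by
        have hterm_meas : ∀ m : Fin d →₀ ℕ,
            Measurable (fun x : Fin d → ℝ => MvPolynomial.coeff m p * ∏ j, x j ^ m j) := by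
          intro m; fun_prop
        have hterm_bound : ∀ m : Fin d →₀ ℕ, ∀ x ∈ K,
            |MvPolynomial.coeff m p * ∏ j, x j ^ m j| ≤ |MvPolynomial.coeff m p| := by
          intro m x hx
          rw [abs_mul]
          have h1 : |∏ j, x j ^ m j| ≤ 1 := by
            rw [Finset.abs_prod]
            refine Finset.prod_le_one (fun j _ => by positivity) fun j _ => ?_
            rw [abs_pow]
            refine pow_le_one₀ (abs_nonneg _) ?_
            exact abs_le.mpr ⟨by linarith [(hKbound x hx j).1], (hKbound x hx j).2⟩
          nlinarith [abs_nonneg (MvPolynomial.coeff m p)]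
        simp_rw [MvPolynomial.eval_eq']
        rw [integral_finset_sum _ (fun m _ => hint μ inferInstance hμK _ (hterm_meas m) _
            (hterm_bound m)),
          integral_finset_sum _ (fun m _ => hint μ' inferInstance hμ'K _ (hterm_meas m) _
            (hterm_bound m))]
        refine Finset.sum_congr rfl fun m _ => ?_
        rw [integral_const_mul, integral_const_mul]
        congr 1
        exact hmono m
      calc |∫ x, f x ∂μ - ∫ x, f x ∂μ'|
          ≤ |∫ x, f x ∂μ - ∫ x, MvPolynomial.eval x p ∂μ|
            + |∫ x, MvPolynomial.eval x p ∂μ - ∫ x, f x ∂μ'| := abs_sub_le _ _ _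
        _ ≤ ε + ε := by
            refine add_le_add (hstep1 μ inferInstance hμK) ?_
            rw [hstep2, abs_sub_comm]
            exact hstep1 μ' inferInstance hμ'K
        _ = 2 * ε := by ring
    by_contra hne
    have hne' : ∫ x, f x ∂μ ≠ ∫ x, f x ∂μ' := hne
    have hpos : 0 < |∫ x, f x ∂μ - ∫ x, f x ∂μ'| := abs_pos.mpr (sub_ne_zero.mpr hne')
    have := habs (|∫ x, f x ∂μ - ∫ x, f x ∂μ'| / 4) (by positivity)
    linarith
  have hμeq : μ = μ' := by
    apply ext_of_forall_lintegral_eq_of_IsFiniteMeasure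
    intro f
    have hcont : Continuous fun x : Fin d → ℝ => ((f x : ℝ≥0) : ℝ) :=
      NNReal.continuous_coe.comp f.continuous
    obtain ⟨Cb, hCb⟩ := f.bounded
    set x₀ : Fin d → ℝ := 0 with hx₀
    set Cf : ℝ := (f x₀ : ℝ) + Cb with hCf
    have hbound : ∀ x, |((f x : ℝ≥0) : ℝ)| ≤ Cf := by
      intro x
      rw [abs_of_nonneg (f x).coe_nonneg]
      have h1 := hCb x x₀
      rw [NNReal.dist_eq] at h1
      have h2 := abs_le.mp h1
      rw [hCf]
      linarith [h2.1]
    have hi : ∀ (ρ : Measure (Fin d → ℝ)), IsProbabilityMeasure ρ →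
        Integrable (fun x => ((f x : ℝ≥0) : ℝ)) ρ := by
      intro ρ hρ
      refine ⟨hcont.measurable.aestronglyMeasurable,
        HasFiniteIntegral.of_bounded (C := Cf) (Eventually.of_forall fun x => ?_)⟩
      simpa [Real.norm_eq_abs] using hbound x
    rw [lintegral_coe_eq_integral _ (hi μ inferInstance),
      lintegral_coe_eq_integral _ (hi μ' inferInstance),
      key _ hcont Cf hbound]
  ext A hA
  calc ν A = ν (φ ⁻¹' (φ '' A)) := by rw [Set.preimage_image_eq A hφinj]
    _ = μ (φ '' A) := (hφemb.map_apply ν (φ '' A)).symm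
    _ = μ' (φ '' A) := by rw [hμeq]
    _ = ν' A := by rw [hφemb.map_apply, Set.preimage_image_eq A hφinj]

lemma laplace_all {d : ℕ} (ν ν' : Measure (Fin d → ℝ))
    [IsProbabilityMeasure ν] [IsProbabilityMeasure ν']
    (h : poissonCompound d ν = poissonCompound d ν')
    (s : Fin d → ℝ) (hs : ∀ j, 0 ≤ s j) :
    ∫ y, Real.exp (-∑ j, s j * ((y j).toNNReal : ℝ)) ∂ν
      = ∫ y, Real.exp (-∑ j, s j * ((y j).toNNReal : ℝ)) ∂ν' := by
  have hsum0 : (0:ℝ) ≤ ∑ j, s j := Finset.sum_nonneg fun j _ => hs j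
  set δ : ℝ := (1 + ∑ j, s j)⁻¹ with hδdef
  have hδ : 0 < δ := by rw [hδdef]; positivity
  set S : (Fin d → ℝ) → ℝ := fun y => ∑ j, s j * ((y j).toNNReal : ℝ) with hSdef
  have hSmeas : Measurable S := by
    apply Finset.measurable_sum
    intro j _
    exact (measurable_const.mul
      (NNReal.continuous_coe.measurable.comp
        (measurable_real_toNNReal.comp (measurable_pi_apply j))))
  have hS0 : ∀ y, 0 ≤ S y :=
    fun y => Finset.sum_nonneg fun j _ => mul_nonneg (hs j) (y j).toNNReal.coe_nonneg
  have hwin : ∀ t : ℝ, 0 < t → t ≤ δ →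
      ∫ y, Real.exp (-(t * S y)) ∂ν = ∫ y, Real.exp (-(t * S y)) ∂ν' := by
    intro t ht0 htδ
    have hr0 : ∀ j, 0 ≤ t * s j := fun j => mul_nonneg ht0.le (hs j)
    have hr1 : ∀ j, t * s j ≤ 1 := by
      intro j
      have h1 : s j ≤ ∑ k, s k := Finset.single_le_sum (fun k _ => hs k) (Finset.mem_univ j)
      have h2 : t * s j ≤ δ * s j := mul_le_mul_of_nonneg_right htδ (hs j)
      have h3 : δ * (1 + ∑ k, s k) = 1 := by
        rw [hδdef]; field_simp
      nlinarith [hs j]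
    have hw := window_real ν ν' h (fun j => t * s j) hr0 hr1
    have hrw : ∀ y : Fin d → ℝ, (-∑ j, (t * s j) * ((y j).toNNReal : ℝ)) = -(t * S y) := by
      intro y
      rw [hSdef]
      rw [Finset.mul_sum]
      congr 1
      exact Finset.sum_congr rfl fun j _ => by ring
    simp_rw [hrw] at hw
    exact hw
  have := laplace_halfline ν ν' S hSmeas hS0 δ hδ hwin
  simpa [hSdef, one_mul] using this

end Aux

/-- Identifiability of the mixing distribution through Poisson observational noise:
equality of Poisson compounds implies equality of the mixing measures. -/
theorem poissonCompound_injective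
    (d : ℕ) (ν ν' : Measure (Fin d → ℝ))
    [IsProbabilityMeasure ν] [IsProbabilityMeasure ν']
    (hν : ∀ᵐ y ∂ν, ∀ j, 0 ≤ y j) (hν' : ∀ᵐ y ∂ν', ∀ j, 0 ≤ y j)
    (h : poissonCompound d ν = poissonCompound d ν') :
    ν = ν' := by
  exact sw_step ν ν' hν hν' (fun s hs => laplace_all ν ν' h s hs)
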